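/- Let m denote Lebesgue measure on [0,1], let C ⊆ [0,1] be a closed set with empty interior and m(C) > 0, let D = [0,1] ∖ C, and let f = χ_C − χ_D ∈ L¹([0,1]). Then there do not exist sequences (x_n), (y_n) in [0,1] with x_n < y_n for all n and real numbers (c_n) with Σ_{n=1}^∞ |c_n| = 1 such that f = Σ_{n=1}^∞ c_n · χ_{[x_n, y_n]}/(y_n − x_n), with the series converging in L¹([0,1]). -/

import Mathlib

open MeasureTheory Filter Topology

/-- Step 2 of Example 3.5 of the paper: for a fat Cantor set `C ⊆ [0,1]`, the function
`f = χ_C − χ_D` is not the sum of an `L¹`-convergent series `Σ cₙ χ_{[xₙ,yₙ]}/(yₙ−xₙ)`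
with `Σ |cₙ| = 1`. -/
theorem stmt_12 (C : Set ℝ) (hCc : IsClosed C) (hCi : interior C = ∅)
    (hC1 : C ⊆ Set.Icc 0 1) (hCm : 0 < volume C) :
    ¬ ∃ (x y : ℕ → ℝ) (c : ℕ → ℝ),
      (∀ n : ℕ, x n ∈ Set.Icc (0 : ℝ) 1 ∧ y n ∈ Set.Icc (0 : ℝ) 1 ∧ x n < y n) ∧
      Summable (fun n => |c n|) ∧ (∑' n, |c n|) = 1 ∧
      Tendsto (fun N : ℕ => ∫ t in Set.Icc (0 : ℝ) 1,
          |(C.indicator (fun _ => (1 : ℝ)) t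
              - (Set.Icc (0 : ℝ) 1 \ C).indicator (fun _ => (1 : ℝ)) t)
            - ∑ n ∈ Finset.range N,
                c n * (Set.Icc (x n) (y n)).indicator (fun _ => (1 : ℝ)) t / (y n - x n)|)
        atTop (nhds 0) := by
  rintro ⟨x, y, c, hxy, hsum, htsum, hconv⟩
  have hCmeas : MeasurableSet C := hCc.measurableSet
  set I : Set ℝ := Set.Icc (0:ℝ) 1 with hIdef
  have hImeas : MeasurableSet I := measurableSet_Icc
  have hIvol : volume I = 1 := by rw [hIdef, Real.volume_Icc]; norm_num
  set D : Set ℝ := I \ C with hDdef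
  have hDmeas : MeasurableSet D := hImeas.diff hCmeas
  set f : ℝ → ℝ := fun t =>
    C.indicator (fun _ => (1:ℝ)) t - D.indicator (fun _ => (1:ℝ)) t with hfdef
  have hCfin : volume C < ⊤ :=
    lt_of_le_of_lt (measure_mono hC1) (hIvol ▸ ENNReal.one_lt_top)
  have hDfin : volume D < ⊤ :=
    lt_of_le_of_lt (measure_mono Set.diff_subset) (hIvol ▸ ENNReal.one_lt_top)
  have hindC : Integrable (C.indicator fun _ => (1:ℝ)) volume :=
    (integrable_indicator_iff hCmeas).2 (integrableOn_const hCfin.ne)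
  have hindD : Integrable (D.indicator fun _ => (1:ℝ)) volume :=
    (integrable_indicator_iff hDmeas).2 (integrableOn_const hDfin.ne)
  have hfint : Integrable f volume := hindC.sub hindD
  have hfmeas : Measurable f :=
    (measurable_const.indicator hCmeas).sub (measurable_const.indicator hDmeas)
  have hfbd : ∀ t, |f t| ≤ 1 := by
    intro t
    by_cases h1 : t ∈ C
    · have h2 : t ∉ D := fun h => h.2 h1
      simp [hfdef, Set.indicator_of_mem h1, Set.indicator_of_notMem h2]
    · by_cases h2 : t ∈ D <;>
        simp [hfdef, Set.indicator_of_notMem h1, Set.indicator_of_mem,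
          Set.indicator_of_notMem, h2]
  have hL : ∀ n, 0 < y n - x n := fun n => sub_pos.2 (hxy n).2.2
  have hInsub : ∀ n, Set.Icc (x n) (y n) ⊆ I := fun n =>
    Set.Icc_subset_Icc (hxy n).1.1 (hxy n).2.1.2
  have hInmeas : ∀ n, MeasurableSet (Set.Icc (x n) (y n)) := fun n => measurableSet_Icc
  have hInvol : ∀ n, volume (Set.Icc (x n) (y n)) = ENNReal.ofReal (y n - x n) :=
    fun n => Real.volume_Icc
  have hInfin : ∀ n, volume (Set.Icc (x n) (y n)) < ⊤ := fun n => by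
    rw [hInvol n]; exact ENNReal.ofReal_lt_top
  set g : ℕ → ℝ → ℝ := fun n t =>
    (Set.Icc (x n) (y n)).indicator (fun _ => (1:ℝ)) t / (y n - x n) with hgdef
  have hgint : ∀ n, Integrable (g n) volume := fun n =>
    ((integrable_indicator_iff (hInmeas n)).2 (integrableOn_const (hInfin n).ne)).div_const _
  have hgnn : ∀ n t, 0 ≤ g n t := by
    intro n t
    rw [hgdef]
    apply div_nonneg _ (hL n).le
    exact Set.indicator_nonneg (fun _ _ => zero_le_one) t
  -- the integral of an indicator against g n
  have hind : ∀ s : Set ℝ, MeasurableSet s → ∀ n,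
      ∫ t in I, s.indicator (fun _ => (1:ℝ)) t * g n t
        = (volume (s ∩ Set.Icc (x n) (y n))).toReal / (y n - x n) := by
    intro s hs n
    have hpt : ∀ t, s.indicator (fun _ => (1:ℝ)) t * g n t
        = (s ∩ Set.Icc (x n) (y n)).indicator (fun _ => (1:ℝ)) t / (y n - x n) := by
      intro t
      rw [hgdef]
      by_cases h1 : t ∈ s <;> by_cases h2 : t ∈ Set.Icc (x n) (y n) <;>
        simp [Set.indicator_of_mem, Set.indicator_of_notMem, h1, h2, Set.mem_inter_iff]
    simp only [hpt]
    rw [integral_div, setIntegral_indicator (hs.inter (hInmeas n)), setIntegral_const,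
      Set.inter_eq_self_of_subset_right ((Set.inter_subset_right).trans (hInsub n))]
    simp [Measure.real]
  have hgI : ∀ n, ∫ t in I, g n t = 1 := by
    intro n
    simp only [hgdef]
    rw [integral_div, setIntegral_indicator (hInmeas n), setIntegral_const,
      Set.inter_eq_self_of_subset_right (hInsub n), measureReal_def, hInvol n,
      ENNReal.toReal_ofReal (hL n).le]
    simp [div_self (hL n).ne']
  -- the key convergence lemma
  have key : ∀ h : ℝ → ℝ, Measurable h → (∀ t, |h t| ≤ 1) →
      Tendsto (fun N => ∑ n ∈ Finset.range N, c n * ∫ t in I, h t * g n t) atTop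
        (𝓝 (∫ t in I, h t * f t)) := by
    intro h hhm hhb
    have hmul : ∀ u : ℝ → ℝ, Integrable u (volume.restrict I) →
        Integrable (fun t => h t * u t) (volume.restrict I) := fun u hu =>
      hu.bdd_mul hhm.aestronglyMeasurable (c := 1) (Filter.Eventually.of_forall fun t => by
        simpa [Real.norm_eq_abs] using hhb t)
    have hSint : ∀ N, Integrable (fun t => ∑ n ∈ Finset.range N, c n * g n t)
        (volume.restrict I) :=
      fun N => integrable_finset_sum _ fun n _ => ((hgint n).const_mul _).restrict
    have heq : ∀ N, (∑ n ∈ Finset.range N, c n * ∫ t in I, h t * g n t)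
        = ∫ t in I, h t * ∑ n ∈ Finset.range N, c n * g n t := by
      intro N
      have hpt : ∀ t, h t * ∑ n ∈ Finset.range N, c n * g n t
          = ∑ n ∈ Finset.range N, c n * (h t * g n t) := by
        intro t; rw [Finset.mul_sum]; exact Finset.sum_congr rfl fun n _ => by ring
      simp only [hpt]
      rw [integral_finset_sum _ fun n _ => (hmul _ ((hgint n).restrict)).const_mul (c n)]
      exact (Finset.sum_congr rfl fun n _ => by rw [integral_const_mul]).symm
    have hconv' : Tendsto
        (fun N => ∫ t in I, |f t - ∑ n ∈ Finset.range N, c n * g n t|) atTop (𝓝 0) := by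
      have hpt : ∀ (N : ℕ) (t : ℝ), f t - ∑ n ∈ Finset.range N, c n * g n t
          = (C.indicator (fun _ => (1:ℝ)) t - D.indicator (fun _ => (1:ℝ)) t)
            - ∑ n ∈ Finset.range N,
                c n * (Set.Icc (x n) (y n)).indicator (fun _ => (1:ℝ)) t / (y n - x n) := by
        intro N t
        simp only [hfdef, hgdef, mul_div_assoc]
      simp only [hpt]
      exact hconv
    have hbound : ∀ N,
        |(∑ n ∈ Finset.range N, c n * ∫ t in I, h t * g n t) - ∫ t in I, h t * f t|
          ≤ ∫ t in I, |f t - ∑ n ∈ Finset.range N, c n * g n t| := by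
      intro N
      rw [heq N, ← integral_sub (hmul _ (hSint N)) (hmul _ hfint.restrict)]
      calc |∫ t in I, (h t * ∑ n ∈ Finset.range N, c n * g n t - h t * f t)|
          ≤ ∫ t in I, |h t * ∑ n ∈ Finset.range N, c n * g n t - h t * f t| := by
            simpa only [Real.norm_eq_abs] using
              norm_integral_le_integral_norm (μ := volume.restrict I)
                (fun t => h t * ∑ n ∈ Finset.range N, c n * g n t - h t * f t)
        _ ≤ ∫ t in I, |f t - ∑ n ∈ Finset.range N, c n * g n t| := by
            refine integral_mono_of_nonneg (Filter.Eventually.of_forall fun t => abs_nonneg _)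
              ?_ (Filter.Eventually.of_forall fun t => ?_)
            · exact (hfint.restrict.sub (hSint N)).abs
            · dsimp only
              rw [← mul_sub, abs_mul, abs_sub_comm]
              exact mul_le_of_le_one_left (abs_nonneg _) (hhb t)
    rw [tendsto_iff_dist_tendsto_zero]
    exact squeeze_zero (fun N => dist_nonneg)
      (fun N => by rw [Real.dist_eq]; exact hbound N) hconv'
  -- ∫ f² = 1
  have hffI : ∫ t in I, f t * f t = 1 := by
    have hpt : Set.EqOn (fun t => f t * f t) (fun _ => (1:ℝ)) I := by
      intro t ht
      by_cases h1 : t ∈ C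
      · have h2 : t ∉ D := fun h => h.2 h1
        simp [hfdef, Set.indicator_of_mem h1, Set.indicator_of_notMem h2]
      · have h2 : t ∈ D := ⟨ht, h1⟩
        simp [hfdef, Set.indicator_of_notMem h1, Set.indicator_of_mem h2]
    rw [setIntegral_congr_fun hImeas hpt, setIntegral_const, measureReal_def, hIvol]
    simp
  set a : ℕ → ℝ := fun n => ∫ t in I, f t * g n t with hadef
  have habd : ∀ n, |a n| ≤ 1 := by
    intro n
    simp only [hadef]
    calc |∫ t in I, f t * g n t| ≤ ∫ t in I, |f t * g n t| := by
          simpa only [Real.norm_eq_abs] using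
            norm_integral_le_integral_norm (μ := volume.restrict I) (fun t => f t * g n t)
      _ ≤ ∫ t in I, g n t := by
          refine integral_mono_of_nonneg (Filter.Eventually.of_forall fun t => abs_nonneg _)
            ?_ (Filter.Eventually.of_forall fun t => ?_)
          · exact (hgint n).restrict
          · dsimp only
            rw [abs_mul, abs_of_nonneg (hgnn n t)]
            exact mul_le_of_le_one_left (hgnn n t) (hfbd t)
      _ = 1 := hgI n
  have hsa : Summable (fun n => c n * a n) := by
    apply Summable.of_abs
    apply Summable.of_nonneg_of_le (fun n => abs_nonneg _) _ hsum
    intro n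
    rw [abs_mul]
    exact mul_le_of_le_one_right (abs_nonneg _) (habd n)
  have h1 : (∑' n, c n * a n) = 1 := by
    have hk := key f hfmeas hfbd
    rw [hffI] at hk
    exact tendsto_nhds_unique hsa.hasSum.tendsto_sum_nat hk
  have hca_le : ∀ n, c n * a n ≤ |c n| := by
    intro n
    calc c n * a n ≤ |c n * a n| := le_abs_self _
      _ = |c n| * |a n| := abs_mul _ _
      _ ≤ |c n| := mul_le_of_le_one_right (abs_nonneg _) (habd n)
  have hca : ∀ n, c n * a n = |c n| := by
    intro n
    by_contra hne
    have hlt : (∑' n, c n * a n) < ∑' n, |c n| :=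
      Summable.tsum_lt_tsum hca_le (lt_of_le_of_ne (hca_le n) hne) hsa hsum
    rw [h1, htsum] at hlt
    exact lt_irrefl 1 hlt
  -- explicit formula for a n
  have hDinter : ∀ n, D ∩ Set.Icc (x n) (y n) = Set.Icc (x n) (y n) \ C := by
    intro n
    ext t
    constructor
    · rintro ⟨⟨_, hnC⟩, hIn⟩; exact ⟨hIn, hnC⟩
    · rintro ⟨hIn, hnC⟩; exact ⟨⟨hInsub n hIn, hnC⟩, hIn⟩
  have hvol_split : ∀ n, (volume (C ∩ Set.Icc (x n) (y n))).toReal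
      + (volume (D ∩ Set.Icc (x n) (y n))).toReal = y n - x n := by
    intro n
    rw [hDinter n, Set.inter_comm,
      ← ENNReal.toReal_add
        (ne_of_lt (lt_of_le_of_lt (measure_mono Set.inter_subset_left) (hInfin n)))
        (ne_of_lt (lt_of_le_of_lt (measure_mono Set.diff_subset) (hInfin n))),
      measure_inter_add_diff _ hCmeas, hInvol n, ENNReal.toReal_ofReal (hL n).le]
  have hχint : ∀ (s : Set ℝ), MeasurableSet s → ∀ n,
      Integrable (fun t => s.indicator (fun _ => (1:ℝ)) t * g n t) (volume.restrict I) := by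
    intro s hs n
    apply ((hgint n).restrict).bdd_mul (c := 1) (measurable_const.indicator hs).aestronglyMeasurable
    refine Filter.Eventually.of_forall fun t => ?_
    by_cases h : t ∈ s <;> simp [h]
  have haeq : ∀ n, a n = ((volume (C ∩ Set.Icc (x n) (y n))).toReal
      - (volume (D ∩ Set.Icc (x n) (y n))).toReal) / (y n - x n) := by
    intro n
    have hpt : ∀ t, f t * g n t
        = C.indicator (fun _ => (1:ℝ)) t * g n t - D.indicator (fun _ => (1:ℝ)) t * g n t := by
      intro t; simp only [hfdef]; ring
    simp only [hadef, hpt]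
    rw [integral_sub (hχint C hCmeas n) (hχint D hDmeas n), hind C hCmeas n, hind D hDmeas n,
      sub_div]
  -- every coefficient kills the C-part
  have hcb : ∀ n, c n * ((volume (C ∩ Set.Icc (x n) (y n))).toReal / (y n - x n)) = 0 := by
    intro n
    have hα : 0 ≤ (volume (C ∩ Set.Icc (x n) (y n))).toReal := ENNReal.toReal_nonneg
    have hβ : 0 ≤ (volume (D ∩ Set.Icc (x n) (y n))).toReal := ENNReal.toReal_nonneg
    rcases lt_trichotomy (c n) 0 with hc | hc | hc
    · have ha : a n = -1 := by
        have h2 : c n * a n = c n * (-1) := by rw [hca n, abs_of_neg hc]; ring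
        exact mul_left_cancel₀ hc.ne h2
      have h3 := (haeq n).symm
      rw [ha, div_eq_iff (hL n).ne'] at h3
      have h4 := hvol_split n
      have h5 : (volume (C ∩ Set.Icc (x n) (y n))).toReal = 0 := by linarith
      rw [h5]
      simp
    · rw [hc]; ring
    · exfalso
      have ha : a n = 1 := by
        have h2 : c n * a n = c n * 1 := by rw [hca n, abs_of_pos hc]; ring
        exact mul_left_cancel₀ hc.ne' h2
      have h3 := (haeq n).symm
      rw [ha, div_eq_iff (hL n).ne'] at h3
      have h4 := hvol_split n
      have h5 : (volume (D ∩ Set.Icc (x n) (y n))).toReal = 0 := by linarith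
      have h6 : volume (Set.Icc (x n) (y n) \ C) = 0 := by
        rw [hDinter n] at h5
        rcases (ENNReal.toReal_eq_zero_iff _).1 h5 with h | h
        · exact h
        · exact absurd h (lt_of_le_of_lt (measure_mono Set.diff_subset) (hInfin n)).ne
      have hne : (Set.Ioo (x n) (y n) \ C).Nonempty := by
        rw [Set.diff_nonempty]
        intro hsub
        have h7 := (isOpen_Ioo.subset_interior_iff).2 hsub
        rw [hCi, Set.subset_empty_iff] at h7
        exact absurd h7 (Set.nonempty_Ioo.2 (hxy n).2.2).ne_empty
      have hpos := (isOpen_Ioo.sdiff hCc).measure_pos volume hne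
      have hle : volume (Set.Ioo (x n) (y n) \ C) ≤ 0 :=
        h6 ▸ measure_mono (Set.diff_subset_diff_left Set.Ioo_subset_Icc_self)
      exact hpos.ne' (le_antisymm hle zero_le)
  -- conclude
  have hχCbd : ∀ t, |C.indicator (fun _ => (1:ℝ)) t| ≤ 1 := by
    intro t; by_cases h : t ∈ C <;> simp [h]
  have h2 := key (C.indicator fun _ => (1:ℝ)) (measurable_const.indicator hCmeas) hχCbd
  have hterm : ∀ n, c n * ∫ t in I, C.indicator (fun _ => (1:ℝ)) t * g n t = 0 := by
    intro n; rw [hind C hCmeas n]; exact hcb n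
  simp only [hterm, Finset.sum_const_zero] at h2
  have h3 : (∫ t in I, C.indicator (fun _ => (1:ℝ)) t * f t) = 0 :=
    (tendsto_nhds_unique tendsto_const_nhds h2).symm
  have h4 : (∫ t in I, C.indicator (fun _ => (1:ℝ)) t * f t) = (volume C).toReal := by
    have hpt : ∀ t, C.indicator (fun _ => (1:ℝ)) t * f t = C.indicator (fun _ => (1:ℝ)) t := by
      intro t
      by_cases h : t ∈ C
      · have h2' : t ∉ D := fun hh => hh.2 h
        simp [hfdef, Set.indicator_of_mem h, Set.indicator_of_notMem h2']
      · simp [Set.indicator_of_notMem h]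
    simp only [hpt]
    rw [setIntegral_indicator hCmeas, Set.inter_eq_self_of_subset_right hC1, setIntegral_const]
    simp [Measure.real]
  rw [h4] at h3
  have h5 := ENNReal.toReal_pos hCm.ne' hCfin.ne
  linarith
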